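/- Let Γ₀ be a group acting on a set S, and Γ ≤ Γ₀ a subgroup of finite index d. Define the mass of an orbit to be the reciprocal of the cardinality of the stabilizer of any representative (taken as 0 when the stabilizer is infinite), and the mass of the orbit set to be the sum of orbit masses. If all relevant stabilizers are finite and the orbit sets are finite, then the mass of Γ\S equals d times the mass of Γ₀\S. -/

import Mathlib

open MulAction

section Aux

variable {G : Type} [Group G] {S : Type} [MulAction G S]

private lemma card_stab_congr {Γ : Type} [Group Γ] {T : Type} [MulAction Γ T] {a b : T}
    (h : (orbitRel Γ T) a b) :
    Nat.card (stabilizer Γ a) = Nat.card (stabilizer Γ b) :=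
  Nat.card_congr (stabilizerEquivStabilizerOfOrbitRel h).toEquiv

/-- the natural projection from H-orbits to G-orbits -/
private def orbitMap (H : Subgroup G) (S : Type) [MulAction G S] :
    Quotient (orbitRel H S) → Quotient (orbitRel G S) :=
  Quotient.map' id (fun a b h => by
    obtain ⟨g, hg⟩ := MulAction.mem_orbit_iff.mp h
    exact MulAction.mem_orbit_iff.mpr ⟨(g : G), hg⟩)

private lemma orbitMap_mk (H : Subgroup G) (y : S) :
    orbitMap H S (Quotient.mk'' y) = Quotient.mk'' y := rfl

end Aux

section Fiber

variable {G : Type} [Group G] {S : Type} [MulAction G S] (H : Subgroup G) (x : S)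

/-- the map from G⧸H to H-orbits, g ↦ [g⁻¹ • x] -/
private def f₀ : G ⧸ H → Quotient (orbitRel H S) :=
  Quotient.lift (fun g => Quotient.mk'' (g⁻¹ • x)) (by
    intro a b hab
    replace hab := QuotientGroup.leftRel_apply.mp hab
    apply Quotient.sound'
    refine MulAction.mem_orbit_iff.mpr ⟨⟨a⁻¹ * b, hab⟩, ?_⟩
    show (a⁻¹ * b) • b⁻¹ • x = a⁻¹ • x
    rw [smul_smul, mul_assoc, mul_inv_cancel, mul_one])

private lemma f₀_mk (g : G) : f₀ H x (QuotientGroup.mk g) = Quotient.mk'' (g⁻¹ • x) := rfl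

/-- descent of f₀ to K-orbits on G⧸H, K = stabilizer of x -/
private def F : Quotient (orbitRel (stabilizer G x) (G ⧸ H)) → Quotient (orbitRel H S) :=
  Quotient.lift (f₀ H x) (by
    intro p q hpq
    obtain ⟨k, hk⟩ := MulAction.mem_orbit_iff.mp hpq
    induction q using QuotientGroup.induction_on with
    | H g =>
      subst hk
      have : (k : G) • (QuotientGroup.mk g : G ⧸ H) = QuotientGroup.mk ((k : G) * g) := rfl
      rw [show ((k • (QuotientGroup.mk g : G ⧸ H))) = QuotientGroup.mk ((k : G) * g) from rfl]
      rw [f₀_mk, f₀_mk]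
      congr 1
      rw [mul_inv_rev, mul_smul]
      congr 1
      have hkx : (k : G) • x = x := k.2
      rw [inv_smul_eq_iff, hkx])

private lemma F_mk (g : G) :
    F H x (Quotient.mk'' (QuotientGroup.mk g)) = Quotient.mk'' (g⁻¹ • x) := rfl

private lemma F_fiber (ω : Quotient (orbitRel (stabilizer G x) (G ⧸ H))) :
    orbitMap H S (F H x ω) = Quotient.mk'' x := by
  obtain ⟨q, rfl⟩ := Quotient.exists_rep ω
  obtain ⟨g, rfl⟩ := QuotientGroup.mk_surjective q
  rw [show (⟦QuotientGroup.mk g⟧ : Quotient (orbitRel (stabilizer G x) (G ⧸ H)))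
    = Quotient.mk'' (QuotientGroup.mk g) from rfl, F_mk, orbitMap_mk]
  exact Quotient.sound' (MulAction.mem_orbit_iff.mpr ⟨g⁻¹, rfl⟩)

end Fiber

section Fiber2
variable {G : Type} [Group G] {S : Type} [MulAction G S] (H : Subgroup G) (x : S)

private lemma F_inj : Function.Injective (F H x) := by
  intro ω ω' hww
  obtain ⟨q, rfl⟩ := Quotient.exists_rep ω
  obtain ⟨q', rfl⟩ := Quotient.exists_rep ω'
  obtain ⟨g, rfl⟩ := QuotientGroup.mk_surjective q
  obtain ⟨g', rfl⟩ := QuotientGroup.mk_surjective q'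
  have h2 : Quotient.mk'' (g⁻¹ • x) = (Quotient.mk'' (g'⁻¹ • x) : Quotient (orbitRel H S)) := hww
  obtain ⟨h, hh⟩ := MulAction.mem_orbit_iff.mp (Quotient.exact' h2)
  -- hh : h • g'⁻¹ • x = g⁻¹ • x, h : H
  have hh' : ((h : G) * g'⁻¹) • x = g⁻¹ • x := by
    rw [mul_smul]; exact hh
  have hk : (g * (h : G) * g'⁻¹) • x = x := by
    rw [show g * (h:G) * g'⁻¹ = g * ((h:G) * g'⁻¹) by group, mul_smul, hh', smul_smul,
      mul_inv_cancel, one_smul]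
  apply Quotient.sound'
  refine MulAction.mem_orbit_iff.mpr ⟨⟨g * (h : G) * g'⁻¹, hk⟩, ?_⟩
  show (g * (h : G) * g'⁻¹) • (QuotientGroup.mk g' : G ⧸ H) = QuotientGroup.mk g
  rw [show (g * (h : G) * g'⁻¹) • (QuotientGroup.mk g' : G ⧸ H)
    = QuotientGroup.mk (g * (h : G) * g'⁻¹ * g') from rfl]
  apply QuotientGroup.eq.mpr
  group
  simpa using h.2

private lemma F_surj (o : Quotient (orbitRel H S)) (ho : orbitMap H S o = Quotient.mk'' x) :
    ∃ ω, F H x ω = o := by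
  obtain ⟨y, rfl⟩ := Quotient.exists_rep o
  have h2 : (Quotient.mk'' y : Quotient (orbitRel G S)) = Quotient.mk'' x := ho
  obtain ⟨g, hg⟩ := MulAction.mem_orbit_iff.mp (Quotient.exact' h2)
  -- hg : g • x = y
  exact ⟨Quotient.mk'' (QuotientGroup.mk g⁻¹), by rw [F_mk]; simp [hg]⟩

/-- conjugation equivalence between Stab_K(gH) and Stab_H(g⁻¹ • x), K = Stab_G x -/
private def stabEquiv (g : G) :
    stabilizer (stabilizer G x) (QuotientGroup.mk g : G ⧸ H) ≃
      stabilizer H (g⁻¹ • x) where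
  toFun k := ⟨⟨g⁻¹ * (k : stabilizer G x) * g, by
      have hk : ((k : stabilizer G x) : G) • (QuotientGroup.mk g : G ⧸ H) = QuotientGroup.mk g :=
        k.2
      have := QuotientGroup.eq.mp (hk : QuotientGroup.mk (((k : stabilizer G x) : G) * g)
        = QuotientGroup.mk g)
      have h2 := H.inv_mem this
      simpa [mul_assoc, mul_inv_rev] using h2⟩, by
    show (g⁻¹ * ((k : stabilizer G x) : G) * g) • g⁻¹ • x = g⁻¹ • x
    have hkx : ((k : stabilizer G x) : G) • x = x := (k : stabilizer G x).2
    rw [smul_smul, show g⁻¹ * ((k : stabilizer G x) : G) * g * g⁻¹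
      = g⁻¹ * ((k : stabilizer G x) : G) by group, mul_smul, hkx]⟩
  invFun h := ⟨⟨g * (h : H) * g⁻¹, by
      have hh : ((h : H) : G) • g⁻¹ • x = g⁻¹ • x := h.2
      show (g * ((h : H) : G) * g⁻¹) • x = x
      rw [mul_smul, mul_smul, hh, smul_smul, mul_inv_cancel, one_smul]⟩, by
    show (g * ((h : H) : G) * g⁻¹) • (QuotientGroup.mk g : G ⧸ H) = QuotientGroup.mk g
    rw [show (g * ((h : H) : G) * g⁻¹) • (QuotientGroup.mk g : G ⧸ H)
      = QuotientGroup.mk (g * ((h : H) : G) * g⁻¹ * g) from rfl]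
    apply QuotientGroup.eq.mpr
    group
    simpa using (h : H).2⟩
  left_inv k := by
    ext
    show g * (g⁻¹ * ((k : stabilizer G x) : G) * g) * g⁻¹ = _
    group
  right_inv h := by
    ext
    show g⁻¹ * (g * ((h : H) : G) * g⁻¹) * g = _
    group

end Fiber2

section Count
variable {G : Type} [Group G] {S : Type} [MulAction G S] (H : Subgroup G) (x : S)

private lemma card_stab_F (ω : Quotient (orbitRel (stabilizer G x) (G ⧸ H))) :
    Nat.card (stabilizer H (Quotient.out (F H x ω)))
      = Nat.card (stabilizer (stabilizer G x) (Quotient.out ω)) := by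
  obtain ⟨g, hg⟩ := QuotientGroup.mk_surjective (Quotient.out ω)
  have hω : ω = Quotient.mk'' (QuotientGroup.mk g) := by
    rw [hg]; exact (Quotient.out_eq' ω).symm
  have h1 : F H x ω = Quotient.mk'' (g⁻¹ • x) := by rw [hω, F_mk]
  have h2 : (orbitRel H S) (Quotient.out (F H x ω)) (g⁻¹ • x) :=
    Quotient.exact' ((Quotient.out_eq' (F H x ω)).trans h1)
  rw [card_stab_congr h2, ← hg]
  exact (Nat.card_congr (stabEquiv H x g)).symm

set_option maxHeartbeats 1000000 in
private lemma fiber_count [Finite (G ⧸ H)] [Finite (stabilizer G x)]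
    [Finite (Quotient (orbitRel (stabilizer G x) (G ⧸ H)))] :
    ∑ᶠ ω : Quotient (orbitRel (stabilizer G x) (G ⧸ H)),
        ((Nat.card (stabilizer (stabilizer G x) (Quotient.out ω)) : ℚ))⁻¹
      = (H.index : ℚ) / (Nat.card (stabilizer G x)) := by
  classical
  cases nonempty_fintype (G ⧸ H)
  cases nonempty_fintype (stabilizer G x)
  cases nonempty_fintype (Quotient (orbitRel (stabilizer G x) (G ⧸ H)))
  haveI : ∀ b : G ⧸ H, Fintype (stabilizer (stabilizer G x) b) := fun b => Fintype.ofFinite _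
  rw [finsum_eq_sum_of_fintype]
  have key := MulAction.card_eq_sum_card_group_div_card_stabilizer (stabilizer G x) (G ⧸ H)
  have hdvd : ∀ ω : Quotient (orbitRel (stabilizer G x) (G ⧸ H)),
      Fintype.card (stabilizer (stabilizer G x) (Quotient.out ω)) ∣
        Fintype.card (stabilizer G x) := fun ω => by
    have h := Subgroup.card_subgroup_dvd_card (stabilizer (stabilizer G x) (Quotient.out ω))
    rwa [Nat.card_eq_fintype_card, Nat.card_eq_fintype_card] at h
  have hindex : (H.index : ℚ) = (Fintype.card (G ⧸ H) : ℚ) := by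
    rw [Subgroup.index, Nat.card_eq_fintype_card]
  have hKcard : (Nat.card (stabilizer G x) : ℚ) = (Fintype.card (stabilizer G x) : ℚ) := by
    rw [Nat.card_eq_fintype_card]
  rw [hindex, hKcard, key]
  push_cast [Nat.cast_sum]
  rw [Finset.sum_div]
  apply Finset.sum_congr rfl
  intro ω _
  have h0 : (Fintype.card (stabilizer (stabilizer G x) (Quotient.out ω)) : ℚ) ≠ 0 := by
    exact_mod_cast Fintype.card_ne_zero
  have hK0 : (Fintype.card (stabilizer G x) : ℚ) ≠ 0 := by
    exact_mod_cast Fintype.card_ne_zero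
  rw [Nat.cast_div (hdvd ω) h0, Nat.card_eq_fintype_card]
  field_simp

end Count

set_option maxHeartbeats 1000000 in
/-- Mass is multiplicative in coverings: if `Γ ≤ Γ₀` has finite index `d` and both act
on `S` (the `Γ`-action by restriction) with finite stabilizers and finitely many orbits,
then the mass of `Γ\S` equals `d` times the mass of `Γ₀\S`, where the mass of an orbit
is the reciprocal of the cardinality of the stabilizer of a representative. -/
theorem mass_multiplicative_in_coverings (G : Type) [Group G] (S : Type) [MulAction G S]
    (H : Subgroup G) (d : ℕ) (hd : H.index = d) (hd0 : d ≠ 0)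
    [∀ x : S, Finite (MulAction.stabilizer G x)]
    [Finite (Quotient (MulAction.orbitRel G S))]
    [Finite (Quotient (MulAction.orbitRel H S))] :
    ∑ᶠ o : Quotient (MulAction.orbitRel H S),
        ((Nat.card (MulAction.stabilizer H (Quotient.out o)) : ℚ))⁻¹ =
      (d : ℚ) * ∑ᶠ o : Quotient (MulAction.orbitRel G S),
        ((Nat.card (MulAction.stabilizer G (Quotient.out o)) : ℚ))⁻¹ := by
  classical
  subst hd
  haveI hfinQ : Finite (G ⧸ H) := by
    apply Nat.finite_of_card_ne_zero
    rwa [← Subgroup.index_eq_card]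
  cases nonempty_fintype (Quotient (orbitRel G S))
  cases nonempty_fintype (Quotient (orbitRel H S))
  rw [finsum_eq_sum_of_fintype, finsum_eq_sum_of_fintype]
  rw [← Fintype.sum_fiberwise (orbitMap H S)
    (fun o => ((Nat.card (stabilizer H (Quotient.out o)) : ℚ))⁻¹)]
  rw [Finset.mul_sum]
  apply Finset.sum_congr rfl
  intro c _
  set x := Quotient.out c with hx
  have hc : Quotient.mk'' x = c := Quotient.out_eq' c
  haveI : Finite (Quotient (orbitRel (stabilizer G x) (G ⧸ H))) := Quotient.finite _
  -- bijection from K-orbits on G⧸H to the fiber of orbitMap over c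
  have hΦ : Function.Bijective
      (fun ω : Quotient (orbitRel (stabilizer G x) (G ⧸ H)) =>
        (⟨F H x ω, by rw [F_fiber, hc]⟩ : {o // orbitMap H S o = c})) := by
    constructor
    · intro a b hab
      exact F_inj H x (congrArg Subtype.val hab)
    · rintro ⟨o, ho⟩
      obtain ⟨ω, hω⟩ := F_surj H x o (by rw [ho, ← hc])
      exact ⟨ω, Subtype.ext hω⟩
  cases nonempty_fintype (Quotient (orbitRel (stabilizer G x) (G ⧸ H)))
  rw [← Fintype.sum_bijective _ hΦ _
    (fun o : {o // orbitMap H S o = c} => ((Nat.card (stabilizer H (Quotient.out o.1)) : ℚ))⁻¹)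
    (fun ω => rfl)]
  have := fiber_count H x
  rw [finsum_eq_sum_of_fintype] at this
  calc ∑ ω : Quotient (orbitRel (stabilizer G x) (G ⧸ H)),
        ((Nat.card (stabilizer H (Quotient.out (F H x ω))) : ℚ))⁻¹
      = ∑ ω : Quotient (orbitRel (stabilizer G x) (G ⧸ H)),
        ((Nat.card (stabilizer (stabilizer G x) (Quotient.out ω)) : ℚ))⁻¹ := by
        apply Finset.sum_congr rfl
        intro ω _
        rw [card_stab_F]
    _ = (H.index : ℚ) / (Nat.card (stabilizer G x)) := this
    _ = (H.index : ℚ) * ((Nat.card (stabilizer G x) : ℚ))⁻¹ := div_eq_mul_inv _ _
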